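/- Let (Ω, μ) be a measure space, let W be a subspace of the space of measurable K-valued functions on Ω (K = ℝ or ℂ), let V be a vector space over K, and let A : W → V be a linear map. Let r ∈ [0, ∞) satisfy Spark(A) > 2r. Then for every v ∈ V there exists at most one f ∈ W such that A f = v and μ(supp f) ≤ r; that is, if g, h ∈ W satisfy A g = A h = v, μ(supp g) ≤ r and μ(supp h) ≤ r, then g = h. -/

import Mathlib

open MeasureTheory ENNReal

/-- The spark of a linear map `A : W → V`, where `W` is a subspace of the measurable
`K`-valued functions on a measure space `(Ω, μ)`:
`Spark(A) = inf { μ(supp f) : f ∈ ker A, f ≠ 0 }` (with `inf ∅ = ∞`). -/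
noncomputable def Spark {Ω K V : Type*} [MeasurableSpace Ω] [RCLike K]
    [AddCommGroup V] [Module K V] (μ : Measure Ω) (W : Submodule K (Ω → K))
    (A : W →ₗ[K] V) : ℝ≥0∞ :=
  sInf {m : ℝ≥0∞ | ∃ f : W, f ∈ LinearMap.ker A ∧ f ≠ 0 ∧
    m = μ (Function.support (f : Ω → K))}

/-- Continuous Donoho–Elad spark sparsity theorem, part (i): if `Spark(A) > 2r`,
then for every `v` there is at most one `f` with `A f = v` and `μ(supp f) ≤ r`. -/
theorem continuous_donoho_elad_spark_sparsity_one
    {Ω K V : Type*} [MeasurableSpace Ω] [RCLike K]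
    [AddCommGroup V] [Module K V] (μ : Measure Ω) (W : Submodule K (Ω → K))
    (hW : ∀ f ∈ W, Measurable f) (A : W →ₗ[K] V)
    (r : ℝ≥0∞) (hr : r ≠ ⊤) (hspark : Spark μ W A > 2 * r) :
    ∀ v : V, ∀ g h : W, A g = v → A h = v →
      μ (Function.support (g : Ω → K)) ≤ r →
      μ (Function.support (h : Ω → K)) ≤ r → g = h := by
  intro v g h hg hh hgr hhr
  by_contra hne
  have hmem : Function.support ((g - h : W) : Ω → K) ⊆
      Function.support (g : Ω → K) ∪ Function.support (h : Ω → K) := by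
    intro x hx
    simp only [Function.mem_support, Submodule.coe_sub, Pi.sub_apply] at hx
    by_contra hc
    simp only [Function.mem_support, not_not, Set.mem_union] at hc
    rcases not_or.mp hc with ⟨h1, h2⟩
    simp only [Function.mem_support, not_not] at h1 h2
    exact hx (by rw [h1, h2, sub_zero])
  have hmu : μ (Function.support ((g - h : W) : Ω → K)) ≤ 2 * r := by
    calc μ (Function.support ((g - h : W) : Ω → K))
        ≤ μ (Function.support (g : Ω → K) ∪ Function.support (h : Ω → K)) :=
          measure_mono hmem
      _ ≤ μ (Function.support (g : Ω → K)) + μ (Function.support (h : Ω → K)) :=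
          measure_union_le _ _
      _ ≤ r + r := add_le_add hgr hhr
      _ = 2 * r := (two_mul r).symm
  have hspark' : Spark μ W A ≤ μ (Function.support ((g - h : W) : Ω → K)) := by
    apply sInf_le
    exact ⟨g - h, by simp [LinearMap.mem_ker, hg, hh], sub_ne_zero.mpr hne, rfl⟩
  exact absurd (hspark'.trans hmu) (not_le.mpr hspark)
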